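/- If (x_n) is Fejér monotone with respect to a nonempty closed convex set C with nonempty interior, then (x_n) converges strongly to some point of X. -/

import Mathlib

open Filter Topology

theorem fejer_int_converges {X : Type*} [NormedAddCommGroup X] [InnerProductSpace ℝ X]
    [CompleteSpace X]
    (C : Set X) (hCcl : IsClosed C) (hCcv : Convex ℝ C)
    (hint : (interior C).Nonempty)
    (x : ℕ → X) (hFej : ∀ c ∈ C, ∀ n : ℕ, ‖x (n + 1) - c‖ ≤ ‖x n - c‖) :
    ∃ p : X, Tendsto x atTop (𝓝 p) := by
  obtain ⟨z, hz⟩ := hint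
  obtain ⟨r, hr, hball⟩ := Metric.isOpen_iff.1 isOpen_interior z hz
  have hballC : Metric.ball z r ⊆ C := hball.trans interior_subset
  have hzC : z ∈ C := hballC (Metric.mem_ball_self hr)
  set a : ℕ → ℝ := fun n => ‖x n - z‖ ^ 2 with ha
  -- key one-step inequality
  have hkey : ∀ c ∈ C, ∀ k : ℕ,
      2 * inner ℝ (x k - x (k + 1)) (c - z) ≤ a k - a (k + 1) := by
    intro c hc k
    have h := hFej c hc k
    have h2 : ‖x (k + 1) - c‖ ^ 2 ≤ ‖x k - c‖ ^ 2 := by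
      have := norm_nonneg (x (k + 1) - c)
      nlinarith
    have e1 : x (k + 1) - c = (x (k + 1) - z) - (c - z) := by abel
    have e2 : x k - c = (x k - z) - (c - z) := by abel
    rw [e1, e2] at h2
    have ex1 := norm_sub_sq_real (x (k + 1) - z) (c - z)
    have ex2 := norm_sub_sq_real (x k - z) (c - z)
    simp only [ha]
    rw [show x k - x (k + 1) = (x k - z) - (x (k + 1) - z) from by abel, inner_sub_left]
    have h3 : ‖x (k + 1) - z‖ ^ 2 - 2 * inner ℝ (x (k + 1) - z) (c - z) + ‖c - z‖ ^ 2
        ≤ ‖x k - z‖ ^ 2 - 2 * inner ℝ (x k - z) (c - z) + ‖c - z‖ ^ 2 := by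
      rw [← ex1, ← ex2]; exact h2
    linarith
  -- summed inequality
  have hsum : ∀ c ∈ C, ∀ n m : ℕ, n ≤ m →
      2 * inner ℝ (x n - x m) (c - z) ≤ a n - a m := by
    intro c hc n m hnm
    induction m with
    | zero =>
        obtain rfl : n = 0 := Nat.le_zero.mp hnm
        simp
    | succ m ih =>
        rcases Nat.lt_or_ge n (m + 1) with h | h
        · have hnm' : n ≤ m := Nat.lt_succ_iff.mp h
          have h1 := ih hnm'
          have h2 := hkey c hc m
          have e : x n - x (m + 1) = (x m - x (m + 1)) + (x n - x m) := by abel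
          rw [e, inner_add_left]
          linarith
        · obtain rfl : n = m + 1 := le_antisymm hnm h
          simp
  -- bound on distances
  have hdist : ∀ n m : ℕ, n ≤ m → r * ‖x m - x n‖ ≤ a n - a m := by
    intro n m hnm
    rcases eq_or_ne (x m) (x n) with h | h
    · have hanti : a m ≤ a n := by
        have := hsum z hzC n m hnm
        simpa using this
      simp [h]
      linarith
    · have hne : x n - x m ≠ 0 := sub_ne_zero.mpr h.symm
      have hpos : (0:ℝ) < ‖x n - x m‖ := norm_pos_iff.mpr hne
      set c : X := z + ((r / 2) * ‖x n - x m‖⁻¹) • (x n - x m) with hc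
      have hcC : c ∈ C := by
        apply hballC
        simp only [Metric.mem_ball, dist_eq_norm, hc]
        have : z + ((r / 2) * ‖x n - x m‖⁻¹) • (x n - x m) - z
            = ((r / 2) * ‖x n - x m‖⁻¹) • (x n - x m) := by abel
        rw [this, norm_smul]
        simp only [Real.norm_eq_abs]
        rw [abs_of_nonneg (by positivity)]
        rw [mul_assoc, inv_mul_cancel₀ (ne_of_gt hpos)]
        linarith
      have h1 := hsum c hcC n m hnm
      have e : c - z = ((r / 2) * ‖x n - x m‖⁻¹) • (x n - x m) := by rw [hc]; abel
      rw [e, real_inner_smul_right, real_inner_self_eq_norm_sq] at h1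
      have heq : 2 * ((r / 2) * ‖x n - x m‖⁻¹ * ‖x n - x m‖ ^ 2) = r * ‖x n - x m‖ := by
        field_simp
      rw [norm_sub_rev]
      linarith [heq ▸ h1]
  -- a is antitone and bounded below, hence converges
  have hanti : Antitone a := by
    intro n m hnm
    have := hsum z hzC n m hnm
    simp at this
    linarith
  have hbdd : BddBelow (Set.range a) := ⟨0, by rintro _ ⟨n, rfl⟩; positivity⟩
  have htend : Tendsto a atTop (𝓝 (⨅ n, a n)) := tendsto_atTop_ciInf hanti hbdd
  set L := ⨅ n, a n with hL
  -- Cauchy sequence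
  have hcauchy : CauchySeq x := by
    rw [Metric.cauchySeq_iff']
    intro ε hε
    have hev : ∀ᶠ n in atTop, a n < L + r * ε :=
      htend.eventually_lt_const (by nlinarith)
    obtain ⟨N, hN⟩ := hev.exists
    refine ⟨N, fun n hn => ?_⟩
    have h1 := hdist N n hn
    have h2 : L ≤ a n := ciInf_le hbdd n
    rw [dist_eq_norm]
    nlinarith
  exact cauchySeq_tendsto_of_complete hcauchy
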